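/- For every integer m ≥ 2, ∑_{j=1}^{m} (-1)^j · (s^m_j)/j = 0, where s^m_j denotes the number of surjective maps from {1,...,m} onto {1,...,j}. -/

import Mathlib

/-- `s^m_j`: the number of surjective maps from an `m`-element set onto a `j`-element set. -/
def surjCount (m j : ℕ) : ℕ :=
  Fintype.card {f : Fin m → Fin j // Function.Surjective f}

open Finset Polynomial Nat

lemma surjCount_eq_card_onto (m : ℕ) {n : ℕ} (s : Finset (Fin n)) :
    Fintype.card {f : Fin m → Fin n // Finset.image f Finset.univ = s} = surjCount m s.card := by
  have e1 : {f : Fin m → Fin n // Finset.image f Finset.univ = s} ≃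
      {g : Fin m → {x // x ∈ s} // Function.Surjective g} := by
    refine
      { toFun := fun f => ⟨fun i => ⟨f.1 i, by
          have := Finset.mem_image_of_mem f.1 (Finset.mem_univ i)
          rwa [f.2] at this⟩, ?_⟩
        invFun := fun g => ⟨fun i => (g.1 i : Fin n), ?_⟩
        left_inv := fun f => by ext i; rfl
        right_inv := fun g => by ext i; rfl }
    · rintro ⟨y, hy⟩
      rw [← f.2] at hy
      obtain ⟨i, -, hi⟩ := Finset.mem_image.1 hy
      exact ⟨i, Subtype.ext hi⟩
    · ext y
      simp only [Finset.mem_image, Finset.mem_univ, true_and]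
      constructor
      · rintro ⟨i, rfl⟩; exact (g.1 i).2
      · intro hy
        obtain ⟨i, hi⟩ := g.2 ⟨y, hy⟩
        exact ⟨i, congrArg Subtype.val hi⟩
  have e2 : {g : Fin m → {x // x ∈ s} // Function.Surjective g} ≃
      {g : Fin m → Fin s.card // Function.Surjective g} :=
    Equiv.subtypeEquiv (Equiv.arrowCongr (Equiv.refl _) s.equivFin)
      (fun g => (Equiv.comp_surjective g s.equivFin).symm)
  rw [Fintype.card_congr (e1.trans e2)]
  rfl

lemma sum_choose_surjCount (m n : ℕ) :
    ∑ j ∈ Finset.range (n + 1), n.choose j * surjCount m j = n ^ m := by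
  classical
  have h := Fintype.card_congr
    (Equiv.sigmaFiberEquiv (fun f : Fin m → Fin n => Finset.image f Finset.univ))
  rw [Fintype.card_sigma] at h
  have hcard : ∀ s : Finset (Fin n),
      Fintype.card {f : Fin m → Fin n // Finset.image f Finset.univ = s} =
        surjCount m s.card := fun s => surjCount_eq_card_onto m s
  calc ∑ j ∈ Finset.range (n + 1), n.choose j * surjCount m j
      = ∑ j ∈ Finset.range (n + 1), n.choose j • surjCount m j := by
        simp [smul_eq_mul]
    _ = ∑ j ∈ Finset.range (#(Finset.univ : Finset (Fin n)) + 1),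
          (#(Finset.univ : Finset (Fin n))).choose j • surjCount m j := by
        simp
    _ = ∑ s ∈ (Finset.univ : Finset (Fin n)).powerset, surjCount m (#s) :=
        (Finset.sum_powerset_apply_card (fun j => surjCount m j)).symm
    _ = ∑ s : Finset (Fin n), surjCount m s.card := by
        rw [Finset.powerset_univ]
    _ = ∑ s : Finset (Fin n),
          Fintype.card {f : Fin m → Fin n // Finset.image f Finset.univ = s} := by
        exact (Finset.sum_congr rfl fun s _ => (hcard s).symm)
    _ = Fintype.card (Fin m → Fin n) := h
    _ = n ^ m := by simp [Fintype.card_fun]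

lemma surjCount_of_lt {m j : ℕ} (h : m < j) : surjCount m j = 0 := by
  rw [surjCount, Fintype.card_eq_zero_iff]
  constructor
  rintro ⟨f, hf⟩
  have := Fintype.card_le_of_surjective f hf
  simp only [Fintype.card_fin] at this
  omega

lemma surjCount_zero_right {m : ℕ} (h : m ≠ 0) : surjCount m 0 = 0 := by
  rw [surjCount, Fintype.card_eq_zero_iff]
  constructor
  rintro ⟨f, -⟩
  exact (f ⟨0, Nat.pos_of_ne_zero h⟩).elim0

lemma sum_choose_surjCount' (m n : ℕ) :
    ∑ j ∈ Finset.range (m + 1), n.choose j * surjCount m j = n ^ m := by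
  rw [← sum_choose_surjCount m n]
  rcases le_total n m with h | h
  · symm
    apply Finset.sum_subset
    · exact Finset.range_subset_range.2 (by omega)
    · intro j hj hj'
      have : n < j := by simp only [Finset.mem_range] at hj hj'; omega
      rw [Nat.choose_eq_zero_of_lt this, zero_mul]
  · apply Finset.sum_subset
    · exact Finset.range_subset_range.2 (by omega)
    · intro j hj hj'
      have : m < j := by simp only [Finset.mem_range] at hj hj'; omega
      rw [surjCount_of_lt this, mul_zero]

lemma descPochhammer_eval_neg_one (k : ℕ) :
    (descPochhammer ℚ k).eval (-1) = (-1) ^ k * k ! := by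
  induction k with
  | zero => simp
  | succ k ih =>
    rw [descPochhammer_succ_right, Polynomial.eval_mul, ih, Polynomial.eval_sub,
      Polynomial.eval_X, Polynomial.eval_natCast, Nat.factorial_succ, pow_succ]
    push_cast
    ring

/-- For every integer `m ≥ 2`, `∑_{j=1}^{m} (-1)^j · s^m_j / j = 0`. -/
theorem surj_alternating_sum (m : ℕ) (hm : 2 ≤ m) :
    ∑ j ∈ Finset.Icc 1 m, (-1 : ℚ) ^ j * (surjCount m j : ℚ) / (j : ℚ) = 0 := by
  classical
  set s : ℕ → ℚ := fun j => (surjCount m j : ℚ) with hs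
  -- the polynomial `p = ∑ (s j / j!) • descPochhammer j`
  set p : ℚ[X] := ∑ j ∈ Finset.range (m + 1), C (s j / j !) * descPochhammer ℚ j with hp
  -- `p` agrees with `X ^ m` on all naturals
  have heval : ∀ n : ℕ, p.eval (n : ℚ) = ((n : ℚ)) ^ m := by
    intro n
    rw [hp]
    rw [Polynomial.eval_finset_sum]
    have : ∀ j ∈ Finset.range (m + 1),
        (C (s j / j !) * descPochhammer ℚ j).eval (n : ℚ) =
          (n.choose j : ℚ) * s j := by
      intro j _
      rw [Polynomial.eval_mul, Polynomial.eval_C,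
        descPochhammer_eval_eq_descFactorial ℚ n j,
        Nat.descFactorial_eq_factorial_mul_choose]
      have hj : ((j ! : ℚ)) ≠ 0 := by exact_mod_cast (Nat.factorial_pos j).ne'
      push_cast
      field_simp
    rw [Finset.sum_congr rfl this]
    have := sum_choose_surjCount' m n
    have := congrArg (fun k : ℕ => (k : ℚ)) this
    push_cast at this
    rw [← this]
  have hpX : p = X ^ m := by
    apply Polynomial.eq_of_infinite_eval_eq
    apply Set.Infinite.mono (s := Set.range ((↑) : ℕ → ℚ))
    · rintro x ⟨n, rfl⟩
      simp only [Set.mem_setOf_eq, heval n, Polynomial.eval_pow, Polynomial.eval_X]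
    · exact Set.infinite_range_of_injective Nat.cast_injective
  -- rewrite p as X * q
  set q : ℚ[X] := ∑ i ∈ Finset.range m,
      C (s (i + 1) / (i + 1)!) * (descPochhammer ℚ i).comp (X - 1) with hq
  have hs0 : s 0 = 0 := by
    rw [hs]
    simp [surjCount_zero_right (by omega : m ≠ 0)]
  have hXq : X * q = p := by
    rw [hp, Finset.sum_range_succ' _ m, hq, Finset.mul_sum]
    have h0 : C (s 0 / (0:ℕ)!) * descPochhammer ℚ 0 = 0 := by
      rw [hs0]; simp
    rw [h0, add_zero]
    refine Finset.sum_congr rfl fun i _ => ?_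
    rw [descPochhammer_succ_left]
    ring
  have hq_eq : q = X ^ (m - 1) := by
    have hx : (X : ℚ[X]) ≠ 0 := Polynomial.X_ne_zero
    apply mul_left_cancel₀ hx
    rw [hXq, hpX]
    conv_lhs => rw [show m = 1 + (m - 1) by omega]
    rw [pow_add, pow_one]
  -- evaluate q at 0
  have hq0 : q.eval 0 = 0 := by
    rw [hq_eq, Polynomial.eval_pow, Polynomial.eval_X, zero_pow (by omega : m - 1 ≠ 0)]
  rw [hq, Polynomial.eval_finset_sum] at hq0
  have hterm : ∀ i ∈ Finset.range m,
      (C (s (i + 1) / (i + 1)!) * (descPochhammer ℚ i).comp (X - 1)).eval 0 =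
        -((-1 : ℚ) ^ (i + 1) * s (i + 1) / ((i : ℚ) + 1)) := by
    intro i _
    rw [Polynomial.eval_mul, Polynomial.eval_C, Polynomial.eval_comp,
      Polynomial.eval_sub, Polynomial.eval_X, Polynomial.eval_one, zero_sub,
      descPochhammer_eval_neg_one i]
    have hfact : ((i + 1)! : ℚ) = ((i : ℚ) + 1) * (i ! : ℚ) := by
      rw [Nat.factorial_succ]; push_cast; ring
    have hi : (i ! : ℚ) ≠ 0 := by exact_mod_cast (Nat.factorial_pos i).ne'
    have hi1 : ((i : ℚ) + 1) ≠ 0 := by positivity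
    rw [hfact]
    field_simp
    ring
  rw [Finset.sum_congr rfl hterm, Finset.sum_neg_distrib, neg_eq_zero] at hq0
  -- reindex Icc 1 m as range m
  have hre : ∑ j ∈ Finset.Icc 1 m, (-1 : ℚ) ^ j * (surjCount m j : ℚ) / (j : ℚ) =
      ∑ i ∈ Finset.range m, (-1 : ℚ) ^ (i + 1) * s (i + 1) / ((i : ℚ) + 1) := by
    rw [show Finset.Icc 1 m = Finset.Ico 1 (m + 1) by rw [Finset.Ico_add_one_right_eq_Icc],
      Finset.sum_Ico_eq_sum_range]
    simp only [Nat.add_sub_cancel]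
    refine Finset.sum_congr rfl fun i _ => ?_
    rw [hs]
    push_cast
    ring_nf
  rw [hre, hq0]
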